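/- Let A be a real m×n matrix with m ≥ n, and let B₁ ∈ ℝ^{k×m} have orthonormal rows and C₁ ∈ ℝ^{n×k} have orthonormal columns, where k ≤ n. Let D = B₁ A C₁ with singular values δ₁ ≥ … ≥ δ_k, and let ρ₁ ≥ … ≥ ρ_n be the singular values of A. Then ρ_i ≥ δ_i for all 1 ≤ i ≤ k. -/

import Mathlib

open Matrix

noncomputable def specNorm {m n : ℕ} (A : Matrix (Fin m) (Fin n) ℝ) : ℝ :=
  ‖LinearMap.toContinuousLinearMap (Matrix.toEuclideanLin A)‖

noncomputable def froNorm {m n : ℕ} (A : Matrix (Fin m) (Fin n) ℝ) : ℝ :=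
  Real.sqrt (∑ i, ∑ j, (A i j) ^ 2)

/-- `ρ` enumerates the singular values of `A` (square roots of the eigenvalues of `AᵀA`)
in non-increasing order. -/
def IsSingularValues {m n : ℕ} (A : Matrix (Fin m) (Fin n) ℝ) (ρ : Fin n → ℝ) : Prop :=
  Antitone ρ ∧ ∃ e : Equiv.Perm (Fin n), ∀ i,
    ρ i = Real.sqrt (((by rw [← Matrix.conjTranspose_eq_transpose_of_trivial]; exact Matrix.isHermitian_conjTranspose_mul_self A : (Aᵀ * A).IsHermitian)).eigenvalues (e i))


section helpers
variable {a b : ℕ}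

lemma mulVec_dot (M : Matrix (Fin a) (Fin b) ℝ) (x : Fin b → ℝ) (y : Fin a → ℝ) :
    (M *ᵥ x) ⬝ᵥ y = x ⬝ᵥ (Mᵀ *ᵥ y) := by
  rw [dotProduct_mulVec, vecMul_transpose]

lemma dot_sum {ι : Type*} (s : Finset ι) (u : Fin a → ℝ) (w : ι → Fin a → ℝ) :
    u ⬝ᵥ (∑ j ∈ s, w j) = ∑ j ∈ s, u ⬝ᵥ w j := by
  simp [dotProduct, Finset.mul_sum]
  exact Finset.sum_comm

lemma dot_self_nonneg (x : Fin a → ℝ) : 0 ≤ x ⬝ᵥ x :=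
  Finset.sum_nonneg fun i _ => mul_self_nonneg _

lemma proj_dot_le (B : Matrix (Fin a) (Fin b) ℝ) (hB : B * Bᵀ = 1) (z : Fin b → ℝ) :
    (B *ᵥ z) ⬝ᵥ (B *ᵥ z) ≤ z ⬝ᵥ z := by
  set w := B *ᵥ z with hw
  have h1 : w ⬝ᵥ w = z ⬝ᵥ (Bᵀ *ᵥ w) := by rw [hw, mulVec_dot]
  have h2 : (Bᵀ *ᵥ w) ⬝ᵥ (Bᵀ *ᵥ w) = w ⬝ᵥ w := by
    rw [mulVec_dot, transpose_transpose, mulVec_mulVec, hB, one_mulVec]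
  have hcs : (z ⬝ᵥ (Bᵀ *ᵥ w)) ^ 2 ≤ (z ⬝ᵥ z) * ((Bᵀ *ᵥ w) ⬝ᵥ (Bᵀ *ᵥ w)) := by
    simpa [dotProduct, sq] using
      Finset.sum_mul_sq_le_sq_mul_sq Finset.univ z (Bᵀ *ᵥ w)
  rw [h2, ← h1] at hcs
  rcases eq_or_lt_of_le (dot_self_nonneg w) with h | h
  · rw [← h]; exact dot_self_nonneg z
  · nlinarith [hcs]
end helpers


variable {n : ℕ} {H : Matrix (Fin n) (Fin n) ℝ} (hH : H.IsHermitian)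

lemma eb_dot (i j : Fin n) :
    ⇑(hH.eigenvectorBasis i) ⬝ᵥ ⇑(hH.eigenvectorBasis j) = if i = j then 1 else 0 := by
  have := orthonormal_iff_ite.mp hH.eigenvectorBasis.orthonormal i j
  rw [dotProduct_comm]
  simpa [PiLp.inner_apply, RCLike.inner_apply, dotProduct] using this

lemma eb_li : LinearIndependent ℝ (fun j => ⇑(hH.eigenvectorBasis j) : Fin n → Fin n → ℝ) := by
  rw [linearIndependent_iff']
  intro s g hsum i hi
  have h := congrArg (fun y => ⇑(hH.eigenvectorBasis i) ⬝ᵥ y) hsum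
  simp only [dot_sum, dotProduct_smul] at h
  simp only [smul_eq_mul, eb_dot, dotProduct_zero, mul_ite, mul_one, mul_zero] at h
  rwa [Finset.sum_ite_eq s i g, if_pos hi] at h

lemma quad_repr_gen {n : ℕ} (H : Matrix (Fin n) (Fin n) ℝ) (v : Fin n → Fin n → ℝ)
    (μ : Fin n → ℝ)
    (hortho : ∀ i j, v i ⬝ᵥ v j = if i = j then 1 else 0)
    (heig : ∀ j, H *ᵥ v j = μ j • v j)
    (S : Finset (Fin n)) {x : Fin n → ℝ}
    (hx : x ∈ Submodule.span ℝ (v '' ↑S)) :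
    x ⬝ᵥ (H *ᵥ x) = ∑ j ∈ S, μ j * (v j ⬝ᵥ x) ^ 2 ∧
    x ⬝ᵥ x = ∑ j ∈ S, (v j ⬝ᵥ x) ^ 2 := by
  have hrep : ∀ y ∈ Submodule.span ℝ (v '' ↑S), (∑ j ∈ S, (v j ⬝ᵥ y) • v j) = y := by
    intro y hy
    induction hy using Submodule.span_induction with
    | mem z hz =>
      obtain ⟨t, ht, rfl⟩ := hz
      have heq : ∀ j ∈ S, (v j ⬝ᵥ v t) • v j = if t = j then v t else 0 := by
        intro j _
        rcases eq_or_ne t j with rfl | hne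
        · simp [hortho]
        · simp [hortho, (Ne.symm hne), hne]
      rw [Finset.sum_congr rfl heq, Finset.sum_ite_eq S t (fun _ => v t),
        if_pos (Finset.mem_coe.mp ht)]
    | zero => simp
    | add z w hz hw ihz ihw =>
      simp only [dotProduct_add, add_smul, Finset.sum_add_distrib, ihz, ihw]
    | smul a z hz ih =>
      simp only [dotProduct_smul, smul_eq_mul, ← smul_smul, ← Finset.smul_sum, ih]
  have hxr := hrep x hx
  have key : ∀ c : Fin n → ℝ, x ⬝ᵥ (∑ j ∈ S, c j • v j) = ∑ j ∈ S, c j * (v j ⬝ᵥ x) := by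
    intro c
    rw [dot_sum]
    exact Finset.sum_congr rfl fun j _ => by
      rw [dotProduct_smul, smul_eq_mul, dotProduct_comm]
  constructor
  · have hmv : H *ᵥ x = ∑ j ∈ S, ((v j ⬝ᵥ x) * μ j) • v j := by
      conv_lhs => rw [← hxr]
      rw [show H *ᵥ (∑ j ∈ S, (v j ⬝ᵥ x) • v j) = H.mulVecLin (∑ j ∈ S, (v j ⬝ᵥ x) • v j)
        from rfl, map_sum]
      refine Finset.sum_congr rfl fun j _ => ?_
      rw [LinearMap.map_smul, mulVecLin_apply, heig j, smul_smul]
    rw [hmv, key]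
    exact Finset.sum_congr rfl fun j _ => by ring
  · have h := key (fun j => v j ⬝ᵥ x)
    rw [hxr] at h
    rw [h]
    exact Finset.sum_congr rfl fun j _ => by ring

lemma span_finrank_eq {n m : ℕ} (v : Fin n → Fin m → ℝ) (hli : LinearIndependent ℝ v)
    (S : Finset (Fin n)) :
    Module.finrank ℝ (Submodule.span ℝ (v '' ↑S)) = S.card := by
  rw [Set.image_eq_range v ↑S]
  have h2 := finrank_span_eq_card (R := ℝ)
    (hli.comp ((↑) : (↑S : Set (Fin n)) → Fin n) Subtype.val_injective)
  exact h2.trans (by simp)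


theorem stmt1 {m n k : ℕ} (hmn : n ≤ m) (hk : k ≤ n)
    (A : Matrix (Fin m) (Fin n) ℝ)
    (B₁ : Matrix (Fin k) (Fin m) ℝ) (C₁ : Matrix (Fin n) (Fin k) ℝ)
    (hB₁ : B₁ * B₁ᵀ = 1) (hC₁ : C₁ᵀ * C₁ = 1)
    (ρ : Fin n → ℝ) (hρ : IsSingularValues A ρ)
    (δ : Fin k → ℝ) (hδ : IsSingularValues (B₁ * A * C₁) δ) :
    ∀ i : Fin k, δ i ≤ ρ (Fin.castLE hk i) := by
  obtain ⟨hρa, e, hρe⟩ := hρ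
  obtain ⟨hδa, e', hδe⟩ := hδ
  intro i
  set M : Matrix (Fin k) (Fin k) ℝ := B₁ * A * C₁ with hM
  have hH : (Aᵀ * A).IsHermitian := by
    rw [← Matrix.conjTranspose_eq_transpose_of_trivial]; exact Matrix.isHermitian_conjTranspose_mul_self A
  have hG : (Mᵀ * M).IsHermitian := by
    rw [← Matrix.conjTranspose_eq_transpose_of_trivial]; exact Matrix.isHermitian_conjTranspose_mul_self M
  set μ : Fin n → ℝ := hH.eigenvalues with hμdef
  set ν : Fin k → ℝ := hG.eigenvalues with hνdef
  have hρe' : ∀ j, ρ j = Real.sqrt (μ (e j)) := hρe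
  have hδe' : ∀ j, δ j = Real.sqrt (ν (e' j)) := hδe
  set vH : Fin n → Fin n → ℝ := fun j => ⇑(hH.eigenvectorBasis j) with hvH
  set vG : Fin k → Fin k → ℝ := fun j => ⇑(hG.eigenvectorBasis j) with hvG
  have hμ0 : ∀ j, 0 ≤ μ j := by
    have h := Matrix.posSemidef_conjTranspose_mul_self A
    rw [conjTranspose_eq_transpose_of_trivial] at h
    exact fun j => h.eigenvalues_nonneg j
  have hν0 : ∀ j, 0 ≤ ν j := by
    have h := Matrix.posSemidef_conjTranspose_mul_self M
    rw [conjTranspose_eq_transpose_of_trivial] at h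
    exact fun j => h.eigenvalues_nonneg j
  set i' : Fin n := Fin.castLE hk i with hi'
  set r : ℝ := ρ i' with hr
  set d : ℝ := δ i with hd
  have hr0 : 0 ≤ r := by rw [hr, hρe']; exact Real.sqrt_nonneg _
  have hd0 : 0 ≤ d := by rw [hd, hδe']; exact Real.sqrt_nonneg _
  set S : Finset (Fin n) := (Finset.Ici i').image e with hS
  set T : Finset (Fin k) := (Finset.Iic i).image e' with hT
  have hScard : S.card = n - (i : ℕ) := by
    rw [hS, Finset.card_image_of_injective _ e.injective, Fin.card_Ici]
    rfl
  have hTcard : T.card = (i : ℕ) + 1 := by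
    rw [hT, Finset.card_image_of_injective _ e'.injective, Fin.card_Iic]
  have hSbound : ∀ j ∈ S, μ j ≤ r ^ 2 := by
    intro j hj
    obtain ⟨j₀, hj₀, rfl⟩ := Finset.mem_image.mp hj
    have h2 : Real.sqrt (μ (e j₀)) ≤ r := by
      rw [← hρe' j₀]; exact hρa (Finset.mem_Ici.mp hj₀)
    calc μ (e j₀) = Real.sqrt (μ (e j₀)) ^ 2 := (Real.sq_sqrt (hμ0 _)).symm
      _ ≤ r ^ 2 := pow_le_pow_left₀ (Real.sqrt_nonneg _) h2 2
  have hTbound : ∀ t ∈ T, d ^ 2 ≤ ν t := by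
    intro t ht
    obtain ⟨j₀, hj₀, rfl⟩ := Finset.mem_image.mp ht
    have h2 : d ≤ Real.sqrt (ν (e' j₀)) := by
      rw [← hδe' j₀]; exact hδa (Finset.mem_Iic.mp hj₀)
    calc d ^ 2 ≤ Real.sqrt (ν (e' j₀)) ^ 2 := pow_le_pow_left₀ hd0 h2 2
      _ = ν (e' j₀) := Real.sq_sqrt (hν0 _)
  -- subspaces
  set U : Submodule ℝ (Fin n → ℝ) := Submodule.span ℝ (vH '' ↑S) with hU
  set W : Submodule ℝ (Fin k → ℝ) := Submodule.span ℝ (vG '' ↑T) with hW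
  set L : (Fin k → ℝ) →ₗ[ℝ] (Fin n → ℝ) := Matrix.mulVecLin C₁ with hL
  have hLinj : Function.Injective L := by
    intro a b hab
    have h := congrArg (fun z => C₁ᵀ *ᵥ z) hab
    simpa [hL, mulVecLin_apply, mulVec_mulVec, hC₁] using h
  set V : Submodule ℝ (Fin n → ℝ) := W.map L with hV
  have hUrank : Module.finrank ℝ U = n - (i : ℕ) := by
    rw [hU, span_finrank_eq vH (eb_li hH) S, hScard]
  have hWrank : Module.finrank ℝ W = (i : ℕ) + 1 := by
    rw [hW, span_finrank_eq vG (eb_li hG) T, hTcard]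
  have hVrank : Module.finrank ℝ V = (i : ℕ) + 1 := by
    rw [hV, ← (Submodule.equivMapOfInjective L hLinj W).finrank_eq, hWrank]
  have hsupinf := Submodule.finrank_sup_add_finrank_inf_eq V U
  have hsup : Module.finrank ℝ ↥(V ⊔ U) ≤ n := by
    have := Submodule.finrank_le (V ⊔ U)
    rwa [Module.finrank_fintype_fun_eq_card, Fintype.card_fin] at this
  have hinfpos : 0 < Module.finrank ℝ ↥(V ⊓ U) := by
    have hin : (i : ℕ) < n := lt_of_lt_of_le i.isLt hk
    omega
  -- pick x
  have : Nontrivial ↥(V ⊓ U) := Module.nontrivial_of_finrank_pos hinfpos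
  obtain ⟨⟨x, hxVU⟩, hxne'⟩ := exists_ne (0 : ↥(V ⊓ U))
  have hxne : x ≠ 0 := fun h0 => hxne' (Subtype.ext h0)
  have hxV : x ∈ V := hxVU.1
  have hxU : x ∈ U := hxVU.2
  obtain ⟨w, hwW, hwx⟩ := Submodule.mem_map.mp hxV
  have hwx' : C₁ *ᵥ w = x := hwx
  -- quadratic forms
  obtain ⟨hq1H, hq2H⟩ := quad_repr_gen (Aᵀ * A) vH μ (fun a b => eb_dot hH a b)
    (fun j => hH.mulVec_eigenvectorBasis j) S hxU
  obtain ⟨hq1G, hq2G⟩ := quad_repr_gen (Mᵀ * M) vG ν (fun a b => eb_dot hG a b)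
    (fun j => hG.mulVec_eigenvectorBasis j) T hwW
  have chainH : x ⬝ᵥ ((Aᵀ * A) *ᵥ x) ≤ r ^ 2 * (x ⬝ᵥ x) := by
    rw [hq1H, hq2H, Finset.mul_sum]
    exact Finset.sum_le_sum fun j hj =>
      mul_le_mul_of_nonneg_right (hSbound j hj) (sq_nonneg _)
  have chainG : d ^ 2 * (w ⬝ᵥ w) ≤ w ⬝ᵥ ((Mᵀ * M) *ᵥ w) := by
    rw [hq1G, hq2G, Finset.mul_sum]
    exact Finset.sum_le_sum fun t ht =>
      mul_le_mul_of_nonneg_right (hTbound t ht) (sq_nonneg _)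
  have bridge1 : w ⬝ᵥ ((Mᵀ * M) *ᵥ w) = (M *ᵥ w) ⬝ᵥ (M *ᵥ w) := by
    rw [← mulVec_mulVec, ← mulVec_dot]
  have bridge2 : M *ᵥ w = B₁ *ᵥ (A *ᵥ x) := by
    rw [hM, ← mulVec_mulVec, ← mulVec_mulVec, hwx']
  have bridge3 : (A *ᵥ x) ⬝ᵥ (A *ᵥ x) = x ⬝ᵥ ((Aᵀ * A) *ᵥ x) := by
    rw [mulVec_dot, mulVec_mulVec]
  have normEq : w ⬝ᵥ w = x ⬝ᵥ x := by
    rw [← hwx', mulVec_dot, mulVec_mulVec, hC₁, one_mulVec]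
  have xpos : 0 < x ⬝ᵥ x :=
    lt_of_le_of_ne (dot_self_nonneg x) fun h => hxne (dotProduct_self_eq_zero.mp h.symm)
  have hmain : d ^ 2 * (x ⬝ᵥ x) ≤ r ^ 2 * (x ⬝ᵥ x) := by
    calc d ^ 2 * (x ⬝ᵥ x) = d ^ 2 * (w ⬝ᵥ w) := by rw [normEq]
      _ ≤ w ⬝ᵥ ((Mᵀ * M) *ᵥ w) := chainG
      _ = (B₁ *ᵥ (A *ᵥ x)) ⬝ᵥ (B₁ *ᵥ (A *ᵥ x)) := by rw [bridge1, bridge2]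
      _ ≤ (A *ᵥ x) ⬝ᵥ (A *ᵥ x) := proj_dot_le B₁ hB₁ _
      _ = x ⬝ᵥ ((Aᵀ * A) *ᵥ x) := bridge3
      _ ≤ r ^ 2 * (x ⬝ᵥ x) := chainH
  have hsq : d ^ 2 ≤ r ^ 2 := le_of_mul_le_mul_right hmain xpos
  calc δ i = Real.sqrt (d ^ 2) := by rw [Real.sqrt_sq hd0]
    _ ≤ Real.sqrt (r ^ 2) := Real.sqrt_le_sqrt hsq
    _ = ρ i' := Real.sqrt_sq hr0
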